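/- (Theorem 3.2) Assume the CRK setup. Let M, K and L be skew-symmetric real d×d matrices, let S : ℝ^d × ℝ × ℝ → ℝ be continuously differentiable in its first argument (gradient ∇_z S), let D_x be a skew-symmetric real N×N matrix and D_y a skew-symmetric real M̃×M̃ matrix, let x_0, …, x_{N−1}, y_0, …, y_{M̃−1} ∈ ℝ and Δt > 0. For j = 0, …, N−1 and l = 0, …, M̃−1 let δ_t z_{jl} : [0,1] → ℝ^d be continuous and z_{jl}⁰ ∈ ℝ^d, define z_{jl}(τ) = z_{jl}⁰ + Δt ∫₀¹ A_{τ,σ} δ_t z_{jl}(σ) dσ, z_{jl}¹ = z_{jl}⁰ + Δt ∫₀¹ δ_t z_{jl}(σ) dσ, δ_x z_{jl}(τ) = Σ_{k=0}^{N−1} (D_x)_{jk} z_{kl}(τ), δ_y z_{jl}(τ) = Σ_{m=0}^{M̃−1} (D_y)_{lm} z_{jm}(τ), and assume M δ_t z_{jl}(τ) + K δ_x z_{jl}(τ) + L δ_y z_{jl}(τ) = ∇_z S(z_{jl}(τ), x_j, y_l) for all τ ∈ [0,1] and all j, l. Then for every j and l, (E_{jl}¹ − E_{jl}⁰)/Δt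 + Σ_{k=0}^{N−1} (D_x)_{jk} F̄_{jk,l} + Σ_{m=0}^{M̃−1} (D_y)_{lm} Ḡ_{j,lm} = 0, where E_{jl}^α = S(z_{jl}^α, x_j, y_l) − (1/2) (z_{jl}^α)ᵀ K δ_x z_{jl}^α − (1/2) (z_{jl}^α)ᵀ L δ_y z_{jl}^α for α ∈ {0,1}, F̄_{jk,l} = (1/2) Σ_{i=1}^s b_i (⟨z_{jl}⟩_iᵀ K ⟨δ_t z_{kl}⟩_i + ⟨z_{kl}⟩_iᵀ K ⟨δ_t z_{jl}⟩_i), and Ḡ_{j,lm} = (1/2) Σ_{i=1}^s b_i (⟨z_{jl}⟩_iᵀ L ⟨δ_t z_{jm}⟩_i + ⟨z_{jm}⟩_iᵀ L ⟨δ_t z_{jl}⟩_i). -/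

import Mathlib

open scoped Matrix
open MeasureTheory intervalIntegral

noncomputable def dotCLM {d : ℕ} (g : Fin d → ℝ) : (Fin d → ℝ) →L[ℝ] ℝ :=
  ∑ i : Fin d, g i • (ContinuousLinearMap.proj i : (Fin d → ℝ) →L[ℝ] ℝ)

noncomputable def lag {s : ℕ} (c : Fin s → ℝ) (i : Fin s) (τ : ℝ) : ℝ :=
  (Lagrange.basis (Finset.univ : Finset (Fin s)) c i).eval τ

noncomputable def bw {s : ℕ} (c : Fin s → ℝ) (i : Fin s) : ℝ :=
  ∫ τ in (0:ℝ)..1, lag c i τ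

noncomputable def Acrk {s : ℕ} (c : Fin s → ℝ) (τ σ : ℝ) : ℝ :=
  ∑ i : Fin s, (1 / bw c i) * (∫ α in (0:ℝ)..τ, lag c i α) * lag c i σ

noncomputable def wavg {s : ℕ} (c : Fin s → ℝ) (i : Fin s) {G : Type*}
    [NormedAddCommGroup G] [NormedSpace ℝ G] (f : ℝ → G) : G :=
  (1 / bw c i) • ∫ τ in (0:ℝ)..1, lag c i τ • f τ

lemma dotCLM_apply {d : ℕ} (g v : Fin d → ℝ) : dotCLM g v = dotProduct g v := by
  simp [dotCLM, dotProduct, ContinuousLinearMap.sum_apply]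

lemma lag_cont {s : ℕ} (c : Fin s → ℝ) (i : Fin s) : Continuous (lag c i) :=
  Polynomial.continuous _

lemma sum_lag {s : ℕ} (hs : 1 ≤ s) (c : Fin s → ℝ) (hc : Function.Injective c) (τ : ℝ) :
    ∑ i, lag c i τ = 1 := by
  have : Nonempty (Fin s) := Fin.pos_iff_nonempty.mp hs
  have h := Lagrange.sum_basis (hc.injOn) (Finset.univ_nonempty (α := Fin s))
  simp only [lag]
  rw [← Polynomial.eval_finset_sum, h, Polynomial.eval_one]

lemma ii_lag_smul {s d : ℕ} (c : Fin s → ℝ) (i : Fin s) {f : ℝ → (Fin d → ℝ)}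
    (hf : ContinuousOn f (Set.Icc 0 1)) :
    IntervalIntegrable (fun τ => lag c i τ • f τ) volume 0 1 := by
  apply ContinuousOn.intervalIntegrable
  rw [Set.uIcc_of_le (by norm_num : (0:ℝ) ≤ 1)]
  exact ((lag_cont c i).continuousOn).smul hf

lemma integral_lag_smul {s d : ℕ} (c : Fin s → ℝ) (hb : ∀ i, bw c i ≠ 0) (i : Fin s)
    {f : ℝ → (Fin d → ℝ)} :
    (∫ τ in (0:ℝ)..1, lag c i τ • f τ) = bw c i • wavg c i f := by
  rw [wavg, smul_smul, mul_one_div, div_self (hb i), one_smul]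

/-- Key lemma: integral of lag times a dot product against a fixed vector. -/
lemma integral_lag_dot {s d : ℕ} (c : Fin s → ℝ) (hb : ∀ i, bw c i ≠ 0) (i : Fin s)
    (u : Fin d → ℝ) {f : ℝ → (Fin d → ℝ)} (hf : ContinuousOn f (Set.Icc 0 1)) :
    (∫ τ in (0:ℝ)..1, lag c i τ * dotProduct u (f τ))
      = bw c i * dotProduct u (wavg c i f) := by
  have h1 : ∀ τ : ℝ, lag c i τ * dotProduct u (f τ)
      = dotCLM u (lag c i τ • f τ) := by
    intro τ
    rw [dotCLM_apply, dotProduct_smul, smul_eq_mul]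
  simp only [h1]
  rw [ContinuousLinearMap.intervalIntegral_comp_comm _ (ii_lag_smul c i hf),
    integral_lag_smul c hb i, dotCLM_apply, dotProduct_smul, smul_eq_mul]

/-- representation of the CRK integral as a finite sum. -/
lemma Acrk_integral {s d : ℕ} (c : Fin s → ℝ) {g : ℝ → (Fin d → ℝ)}
    (hg : ContinuousOn g (Set.Icc 0 1)) (τ : ℝ) :
    (∫ σ in (0:ℝ)..1, Acrk c τ σ • g σ)
      = ∑ i, (∫ α in (0:ℝ)..τ, lag c i α) • wavg c i g := by
  have h1 : ∀ σ : ℝ, Acrk c τ σ • g σ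
      = ∑ i, ((1 / bw c i) * (∫ α in (0:ℝ)..τ, lag c i α)) • (lag c i σ • g σ) := by
    intro σ
    rw [Acrk, Finset.sum_smul]
    refine Finset.sum_congr rfl fun i _ => ?_
    rw [smul_smul, mul_assoc]
  rw [intervalIntegral.integral_congr (g := fun σ =>
      ∑ i, ((1 / bw c i) * (∫ α in (0:ℝ)..τ, lag c i α)) • (lag c i σ • g σ))
      (fun σ _ => h1 σ)]
  have h2 : ∀ i ∈ (Finset.univ : Finset (Fin s)), IntervalIntegrable
      (fun σ => ((1 / bw c i) * (∫ α in (0:ℝ)..τ, lag c i α)) • (lag c i σ • g σ)) volume 0 1 := by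
    intro i _
    apply ContinuousOn.intervalIntegrable
    rw [Set.uIcc_of_le (by norm_num : (0:ℝ) ≤ 1)]
    exact (continuousOn_const (c := ((1 / bw c i) * (∫ α in (0:ℝ)..τ, lag c i α) : ℝ))).smul (((lag_cont c i).continuousOn).smul hg)
  rw [intervalIntegral.integral_finset_sum h2]
  refine Finset.sum_congr rfl fun i _ => ?_
  rw [intervalIntegral.integral_smul, wavg, smul_smul]
  congr 1
  ring

lemma hasDerivAt_intlag {s : ℕ} (c : Fin s → ℝ) (i : Fin s) (τ : ℝ) :
    HasDerivAt (fun u => ∫ α in (0:ℝ)..u, lag c i α) (lag c i τ) τ :=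
  intervalIntegral.integral_hasDerivAt_right ((lag_cont c i).intervalIntegrable 0 τ)
    ((lag_cont c i).stronglyMeasurableAtFilter _ _) ((lag_cont c i).continuousAt)

lemma zf_hasDerivAt {s d : ℕ} (c : Fin s → ℝ) (W : Fin s → (Fin d → ℝ))
    (w0 : Fin d → ℝ) (Δt : ℝ) (τ : ℝ) :
    HasDerivAt (fun u => w0 + Δt • ∑ i, (∫ α in (0:ℝ)..u, lag c i α) • W i)
      (Δt • ∑ i, lag c i τ • W i) τ := by
  have h : HasDerivAt (fun u => ∑ i, (∫ α in (0:ℝ)..u, lag c i α) • W i)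
      (∑ i, lag c i τ • W i) τ :=
    HasDerivAt.fun_sum fun i _ => (hasDerivAt_intlag c i τ).smul_const (W i)
  simpa using (h.const_smul Δt).const_add w0

lemma sum_bw_smul_wavg {s d : ℕ} (hs : 1 ≤ s) (c : Fin s → ℝ) (hc : Function.Injective c)
    (hb : ∀ i, bw c i ≠ 0) {g : ℝ → (Fin d → ℝ)} (hg : ContinuousOn g (Set.Icc 0 1)) :
    ∑ i, bw c i • wavg c i g = ∫ τ in (0:ℝ)..1, g τ := by
  have h1 : ∀ i : Fin s, bw c i • wavg c i g = ∫ τ in (0:ℝ)..1, lag c i τ • g τ :=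
    fun i => (integral_lag_smul c hb i).symm
  simp only [h1]
  rw [← intervalIntegral.integral_finset_sum (fun i _ => ii_lag_smul c i hg)]
  apply intervalIntegral.integral_congr
  intro τ hτ
  show ∑ i, lag c i τ • g τ = g τ
  rw [← Finset.sum_smul, sum_lag hs c hc τ, one_smul]

lemma dot_mulVec_left {d : ℕ} (A : Matrix (Fin d) (Fin d) ℝ) (u v : Fin d → ℝ) :
    dotProduct u (A.mulVec v) = dotProduct (Aᵀ.mulVec u) v := by
  rw [Matrix.dotProduct_mulVec, Matrix.mulVec_transpose]

lemma dot_skew_swap {d : ℕ} {A : Matrix (Fin d) (Fin d) ℝ} (hA : Aᵀ = -A) (u v : Fin d → ℝ) :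
    dotProduct u (A.mulVec v) = - dotProduct v (A.mulVec u) := by
  rw [dot_mulVec_left, hA, Matrix.neg_mulVec, neg_dotProduct, dotProduct_comm]

lemma dot_skew_self {d : ℕ} {A : Matrix (Fin d) (Fin d) ℝ} (hA : Aᵀ = -A) (v : Fin d → ℝ) :
    dotProduct v (A.mulVec v) = 0 := by
  have := dot_skew_swap hA v v
  linarith

lemma contOn_ii {E : Type*} [NormedAddCommGroup E] {f : ℝ → E}
    (hf : ContinuousOn f (Set.Icc 0 1)) : IntervalIntegrable f volume 0 1 := by
  apply ContinuousOn.intervalIntegrable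
  rwa [Set.uIcc_of_le (by norm_num : (0:ℝ) ≤ 1)]

lemma wavg_mulVec {s d : ℕ} (c : Fin s → ℝ) (i : Fin s) (A : Matrix (Fin d) (Fin d) ℝ)
    {f : ℝ → (Fin d → ℝ)} (hf : ContinuousOn f (Set.Icc 0 1)) :
    wavg c i (fun τ => A.mulVec (f τ)) = A.mulVec (wavg c i f) := by
  have h1 : ∀ τ : ℝ, lag c i τ • A.mulVec (f τ) = (LinearMap.toContinuousLinearMap A.mulVecLin) (lag c i τ • f τ) := by
    intro τ
    simp [Matrix.mulVec_smul]
  simp only [wavg, h1]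
  rw [ContinuousLinearMap.intervalIntegral_comp_comm
    (A.mulVecLin.toContinuousLinearMap) (ii_lag_smul c i hf)]
  simp [Matrix.mulVec_smul]

lemma contOn_dot {d : ℕ} {f : ℝ → (Fin d → ℝ)} {S : Set ℝ} (u : Fin d → ℝ)
    (hf : ContinuousOn f S) : ContinuousOn (fun τ => dotProduct u (f τ)) S := by
  simp only [dotProduct]
  exact continuousOn_finset_sum _ fun p _ =>
    continuousOn_const.mul ((continuous_apply p).comp_continuousOn hf)

lemma integral_P_dot {s d : ℕ} (c : Fin s → ℝ) (hb : ∀ i, bw c i ≠ 0)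
    (Δt : ℝ) (v : Fin s → (Fin d → ℝ)) {f : ℝ → (Fin d → ℝ)}
    (hf : ContinuousOn f (Set.Icc 0 1)) :
    (∫ τ in (0:ℝ)..1, dotProduct (Δt • ∑ i, lag c i τ • v i) (f τ))
      = Δt * ∑ i, bw c i * dotProduct (v i) (wavg c i f) := by
  have h1 : ∀ τ : ℝ, dotProduct (Δt • ∑ i, lag c i τ • v i) (f τ)
      = Δt * ∑ i, lag c i τ * dotProduct (v i) (f τ) := by
    intro τ
    simp only [dotProduct, Pi.smul_apply, Finset.sum_apply, smul_eq_mul,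
      Finset.sum_mul, Finset.mul_sum]
    rw [Finset.sum_comm]
    exact Finset.sum_congr rfl fun i _ => Finset.sum_congr rfl fun p _ => by ring
  simp only [h1]
  rw [intervalIntegral.integral_const_mul]
  congr 1
  have h2 : ∀ i ∈ (Finset.univ : Finset (Fin s)), IntervalIntegrable
      (fun τ => lag c i τ * dotProduct (v i) (f τ)) volume 0 1 := by
    intro i _
    apply contOn_ii
    exact ((lag_cont c i).continuousOn).mul ((contOn_dot (v i) hf))
  rw [intervalIntegral.integral_finset_sum h2]
  exact Finset.sum_congr rfl fun i _ => integral_lag_dot c hb i (v i) hf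

lemma hasDerivAt_dot_mulVec {d : ℕ} (A : Matrix (Fin d) (Fin d) ℝ)
    {f g : ℝ → (Fin d → ℝ)} {f' g' : Fin d → ℝ} {τ : ℝ}
    (hf : HasDerivAt f f' τ) (hg : HasDerivAt g g' τ) :
    HasDerivAt (fun u => dotProduct (f u) (A.mulVec (g u)))
      (dotProduct f' (A.mulVec (g τ)) + dotProduct (f τ) (A.mulVec g')) τ := by
  have hfp : ∀ p : Fin d, HasDerivAt (fun u => f u p) (f' p) τ := fun p =>
    ((ContinuousLinearMap.proj p : (Fin d → ℝ) →L[ℝ] ℝ).hasFDerivAt.comp_hasDerivAt τ hf)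
  have hgp : ∀ p : Fin d, HasDerivAt (fun u => g u p) (g' p) τ := fun p =>
    ((ContinuousLinearMap.proj p : (Fin d → ℝ) →L[ℝ] ℝ).hasFDerivAt.comp_hasDerivAt τ hg)
  have H : HasDerivAt (fun u => ∑ p, ∑ q, f u p * (A p q * g u q))
      (∑ p, ∑ q, (f' p * (A p q * g τ q) + f τ p * (A p q * g' q))) τ :=
    HasDerivAt.fun_sum fun p _ => HasDerivAt.fun_sum fun q _ =>
      (hfp p).mul ((hgp q).const_mul (A p q))
  have e1 : (fun u => ∑ p, ∑ q, f u p * (A p q * g u q))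
      = fun u => dotProduct (f u) (A.mulVec (g u)) := by
    funext u
    simp [dotProduct, Matrix.mulVec, Finset.mul_sum]
  have e2 : (∑ p, ∑ q, (f' p * (A p q * g τ q) + f τ p * (A p q * g' q)))
      = dotProduct f' (A.mulVec (g τ)) + dotProduct (f τ) (A.mulVec g') := by
    simp [dotProduct, Matrix.mulVec, Finset.mul_sum, Finset.sum_add_distrib]
  rw [← e1, ← e2]
  exact H

lemma contOn_dot2 {d : ℕ} {f g : ℝ → (Fin d → ℝ)} {S : Set ℝ}
    (hf : ContinuousOn f S) (hg : ContinuousOn g S) :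
    ContinuousOn (fun τ => dotProduct (f τ) (g τ)) S := by
  simp only [dotProduct]
  exact continuousOn_finset_sum _ fun p _ =>
    ((continuous_apply p).comp_continuousOn hf).mul ((continuous_apply p).comp_continuousOn hg)

lemma contOn_mulVec {d : ℕ} (A : Matrix (Fin d) (Fin d) ℝ) {f : ℝ → (Fin d → ℝ)} {S : Set ℝ}
    (hf : ContinuousOn f S) : ContinuousOn (fun τ => A.mulVec (f τ)) S := by
  apply continuousOn_pi.2
  intro p
  exact contOn_dot (A p) hf

lemma dot_sum_right {d n : ℕ} (u : Fin d → ℝ) (w : Fin n → (Fin d → ℝ)) :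
    dotProduct u (∑ k, w k) = ∑ k, dotProduct u (w k) := by
  simp only [dotProduct, Finset.sum_apply, Finset.mul_sum]
  exact Finset.sum_comm

lemma mulVec_sum_smul {d n : ℕ} (A : Matrix (Fin d) (Fin d) ℝ) (r : Fin n → ℝ)
    (w : Fin n → (Fin d → ℝ)) :
    A.mulVec (∑ k, r k • w k) = ∑ k, r k • A.mulVec (w k) := by
  have h : ∀ v : Fin d → ℝ, A.mulVec v = A.mulVecLin v := fun v => rfl
  simp only [h]
  rw [map_sum]
  exact Finset.sum_congr rfl fun k _ => by rw [_root_.map_smul]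

lemma dot_mulVec_sum_smul {d n : ℕ} (u : Fin d → ℝ) (A : Matrix (Fin d) (Fin d) ℝ)
    (r : Fin n → ℝ) (w : Fin n → (Fin d → ℝ)) :
    dotProduct u (A.mulVec (∑ k, r k • w k))
      = ∑ k, r k * dotProduct u (A.mulVec (w k)) := by
  rw [mulVec_sum_smul, dot_sum_right]
  exact Finset.sum_congr rfl fun k _ => by rw [dotProduct_smul, smul_eq_mul]

lemma sum_mul_mul {n : ℕ} (t : ℝ) (r X : Fin n → ℝ) :
    ∑ k, r k * (t * X k) = t * ∑ k, r k * X k := by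
  rw [Finset.mul_sum]
  exact Finset.sum_congr rfl fun k _ => by ring
theorem stmt8 {s d N Mt : ℕ} (hs : 1 ≤ s) (c : Fin s → ℝ) (hc : Function.Injective c)
    (hb : ∀ i, bw c i ≠ 0)
    (M K L : Matrix (Fin d) (Fin d) ℝ) (hM : Mᵀ = -M) (hK : Kᵀ = -K) (hL : Lᵀ = -L)
    (S : (Fin d → ℝ) → ℝ → ℝ → ℝ) (gradS : (Fin d → ℝ) → ℝ → ℝ → (Fin d → ℝ))
    (hS : ∀ (x y : ℝ) (w : Fin d → ℝ), HasFDerivAt (fun w' => S w' x y) (dotCLM (gradS w x y)) w)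
    (hSc : ∀ x y : ℝ, Continuous fun w => gradS w x y)
    (Dx : Matrix (Fin N) (Fin N) ℝ) (hDx : Dxᵀ = -Dx)
    (Dy : Matrix (Fin Mt) (Fin Mt) ℝ) (hDy : Dyᵀ = -Dy)
    (x : Fin N → ℝ) (y : Fin Mt → ℝ) (Δt : ℝ) (hΔt : 0 < Δt)
    (δtz : Fin N → Fin Mt → ℝ → (Fin d → ℝ))
    (hδtc : ∀ j l, ContinuousOn (δtz j l) (Set.Icc 0 1))
    (z0 : Fin N → Fin Mt → Fin d → ℝ) (z : Fin N → Fin Mt → ℝ → (Fin d → ℝ))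
    (hz : ∀ j l τ, z j l τ = z0 j l + Δt • ∫ σ in (0:ℝ)..1, Acrk c τ σ • δtz j l σ)
    (z1 : Fin N → Fin Mt → Fin d → ℝ)
    (hz1 : ∀ j l, z1 j l = z0 j l + Δt • ∫ σ in (0:ℝ)..1, δtz j l σ)
    (δxz δyz : Fin N → Fin Mt → ℝ → (Fin d → ℝ))
    (hδx : ∀ j l τ, δxz j l τ = ∑ k, Dx j k • z k l τ)
    (hδy : ∀ j l τ, δyz j l τ = ∑ m, Dy l m • z j m τ)
    (hcoll : ∀ j l, ∀ τ ∈ Set.Icc (0:ℝ) 1,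
      M.mulVec (δtz j l τ) + K.mulVec (δxz j l τ) + L.mulVec (δyz j l τ)
        = gradS (z j l τ) (x j) (y l))
    (E0 E1 : Fin N → Fin Mt → ℝ)
    (hE0 : ∀ j l, E0 j l = S (z j l 0) (x j) (y l)
        - (1/2) * dotProduct (z j l 0) (K.mulVec (∑ k, Dx j k • z k l 0))
        - (1/2) * dotProduct (z j l 0) (L.mulVec (∑ m, Dy l m • z j m 0)))
    (hE1 : ∀ j l, E1 j l = S (z1 j l) (x j) (y l)
        - (1/2) * dotProduct (z1 j l) (K.mulVec (∑ k, Dx j k • z1 k l))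
        - (1/2) * dotProduct (z1 j l) (L.mulVec (∑ m, Dy l m • z1 j m)))
    (Fb : Fin N → Fin N → Fin Mt → ℝ) (Gb : Fin N → Fin Mt → Fin Mt → ℝ)
    (hFb : ∀ j k l, Fb j k l = (1/2) * ∑ i, bw c i *
        (dotProduct (wavg c i (z j l)) (K.mulVec (wavg c i (δtz k l)))
          + dotProduct (wavg c i (z k l)) (K.mulVec (wavg c i (δtz j l)))))
    (hGb : ∀ j l m, Gb j l m = (1/2) * ∑ i, bw c i *
        (dotProduct (wavg c i (z j l)) (L.mulVec (wavg c i (δtz j m)))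
          + dotProduct (wavg c i (z j m)) (L.mulVec (wavg c i (δtz j l))))) :
    ∀ j l, (E1 j l - E0 j l) / Δt + (∑ k, Dx j k * Fb j k l) + (∑ m, Dy l m * Gb j l m) = 0 := by
  intro j l
  -- abbreviations
  set W : Fin N → Fin Mt → Fin s → (Fin d → ℝ) := fun k m i => wavg c i (z k m) with hW
  set a : Fin N → Fin Mt → Fin s → (Fin d → ℝ) := fun k m i => wavg c i (δtz k m) with ha
  -- representation of z
  have hzrep : ∀ k m (τ : ℝ),
      z k m τ = z0 k m + Δt • ∑ i, (∫ α in (0:ℝ)..τ, lag c i α) • a k m i := by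
    intro k m τ
    rw [hz, Acrk_integral c (hδtc k m)]
  have hzd : ∀ k m (τ : ℝ),
      HasDerivAt (z k m) (Δt • ∑ i, lag c i τ • a k m i) τ := by
    intro k m τ
    have he : z k m = fun u =>
        z0 k m + Δt • ∑ i, (∫ α in (0:ℝ)..u, lag c i α) • a k m i := funext (hzrep k m)
    rw [he]
    exact zf_hasDerivAt c (a k m) (z0 k m) Δt τ
  have hzc : ∀ k m, Continuous (z k m) := fun k m =>
    continuous_iff_continuousAt.2 fun τ => (hzd k m τ).continuousAt
  have hz00 : ∀ k m, z k m 0 = z0 k m := by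
    intro k m
    rw [hzrep]
    simp
  have hz11 : ∀ k m, z k m 1 = z1 k m := by
    intro k m
    rw [hzrep, hz1]
    congr 1
    have hbwdef : ∀ i : Fin s, (∫ α in (0:ℝ)..1, lag c i α) = bw c i := fun i => rfl
    simp only [hbwdef]
    congr 1
    exact sum_bw_smul_wavg hs c hc hb (hδtc k m)
  -- continuity of P
  have hPc : ∀ k m, Continuous (fun τ => Δt • ∑ i, lag c i τ • a k m i) := by
    intro k m
    exact (continuous_finset_sum _ fun i _ => (lag_cont c i).smul continuous_const).const_smul Δt
  have hzcon : ∀ k m, ContinuousOn (z k m) (Set.Icc 0 1) := fun k m => (hzc k m).continuousOn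
  -- FTC for the S part
  have hSdiff : S (z1 j l) (x j) (y l) - S (z0 j l) (x j) (y l)
      = Δt * ∑ k, Dx j k * ∑ i, bw c i *
          dotProduct (a j l i) (K.mulVec (W k l i))
      + Δt * ∑ m, Dy l m * ∑ i, bw c i *
          dotProduct (a j l i) (L.mulVec (W j m i)) := by
    have hder : ∀ τ ∈ Set.uIcc (0:ℝ) 1, HasDerivAt (fun u => S (z j l u) (x j) (y l))
        (dotProduct (gradS (z j l τ) (x j) (y l)) (Δt • ∑ i, lag c i τ • a j l i)) τ := by
      intro τ _
      have h := (hS (x j) (y l) (z j l τ)).comp_hasDerivAt τ (hzd j l τ)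
      rwa [dotCLM_apply] at h
    have hic : ContinuousOn (fun τ => dotProduct (gradS (z j l τ) (x j) (y l))
        (Δt • ∑ i, lag c i τ • a j l i)) (Set.Icc 0 1) :=
      contOn_dot2 (((hSc (x j) (y l)).comp (hzc j l)).continuousOn) ((hPc j l).continuousOn)
    have hFTC := intervalIntegral.integral_eq_sub_of_hasDerivAt hder (contOn_ii hic)
    rw [hz11, hz00] at hFTC
    rw [← hFTC]
    -- rewrite the integrand using the collocation equations
    have hcongr : (∫ τ in (0:ℝ)..1, dotProduct (gradS (z j l τ) (x j) (y l))
          (Δt • ∑ i, lag c i τ • a j l i))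
        = ∫ τ in (0:ℝ)..1,
          (dotProduct (Δt • ∑ i, lag c i τ • a j l i) (M.mulVec (δtz j l τ))
          + ((∑ k, Dx j k * dotProduct (Δt • ∑ i, lag c i τ • a j l i)
                (K.mulVec (z k l τ)))
          + (∑ m, Dy l m * dotProduct (Δt • ∑ i, lag c i τ • a j l i)
                (L.mulVec (z j m τ))))) := by
      apply intervalIntegral.integral_congr
      intro τ hτ
      rw [Set.uIcc_of_le (by norm_num : (0:ℝ) ≤ 1)] at hτ
      show dotProduct (gradS (z j l τ) (x j) (y l)) (Δt • ∑ i, lag c i τ • a j l i) = _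
      rw [← hcoll j l τ hτ, dotProduct_comm, dotProduct_add,
        dotProduct_add, hδx j l τ, hδy j l τ, dot_mulVec_sum_smul, dot_mulVec_sum_smul]
      rw [add_assoc]
    rw [hcongr]
    have hi1 : IntervalIntegrable (fun τ => dotProduct (Δt • ∑ i, lag c i τ • a j l i)
        (M.mulVec (δtz j l τ))) volume 0 1 :=
      contOn_ii (contOn_dot2 ((hPc j l).continuousOn) (contOn_mulVec M (hδtc j l)))
    have hi2 : IntervalIntegrable (fun τ => ∑ k, Dx j k *
        dotProduct (Δt • ∑ i, lag c i τ • a j l i) (K.mulVec (z k l τ))) volume 0 1 :=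
      contOn_ii (continuousOn_finset_sum _ fun k _ => continuousOn_const.mul
        (contOn_dot2 ((hPc j l).continuousOn) (contOn_mulVec K (hzcon k l))))
    have hi3 : IntervalIntegrable (fun τ => ∑ m, Dy l m *
        dotProduct (Δt • ∑ i, lag c i τ • a j l i) (L.mulVec (z j m τ))) volume 0 1 :=
      contOn_ii (continuousOn_finset_sum _ fun m _ => continuousOn_const.mul
        (contOn_dot2 ((hPc j l).continuousOn) (contOn_mulVec L (hzcon j m))))
    rw [intervalIntegral.integral_add hi1 (hi2.add hi3), intervalIntegral.integral_add hi2 hi3]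
    have hp1 : (∫ τ in (0:ℝ)..1, dotProduct (Δt • ∑ i, lag c i τ • a j l i)
        (M.mulVec (δtz j l τ))) = 0 := by
      rw [integral_P_dot c hb Δt (a j l) (contOn_mulVec M (hδtc j l))]
      have h0 : ∀ i ∈ (Finset.univ : Finset (Fin s)), bw c i * dotProduct (a j l i)
          (wavg c i (fun τ => M.mulVec (δtz j l τ))) = 0 := by
        intro i _
        rw [wavg_mulVec c i M (hδtc j l)]
        have hself : dotProduct (a j l i) (M.mulVec (wavg c i (δtz j l))) = 0 :=
          dot_skew_self hM (wavg c i (δtz j l))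
        rw [hself, mul_zero]
      rw [Finset.sum_eq_zero h0, mul_zero]
    have hp2 : (∫ τ in (0:ℝ)..1, ∑ k, Dx j k *
        dotProduct (Δt • ∑ i, lag c i τ • a j l i) (K.mulVec (z k l τ)))
        = Δt * ∑ k, Dx j k * ∑ i, bw c i *
            dotProduct (a j l i) (K.mulVec (W k l i)) := by
      rw [intervalIntegral.integral_finset_sum (fun k _ => contOn_ii ((continuousOn_const (c := Dx j k)).fun_mul
        (contOn_dot2 ((hPc j l).continuousOn) (contOn_mulVec K (hzcon k l)))))]
      have hk : ∀ k ∈ (Finset.univ : Finset (Fin N)),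
          (∫ τ in (0:ℝ)..1, Dx j k * dotProduct (Δt • ∑ i, lag c i τ • a j l i)
            (K.mulVec (z k l τ)))
          = Dx j k * (Δt * ∑ i, bw c i *
              dotProduct (a j l i) (K.mulVec (W k l i))) := by
        intro k _
        rw [intervalIntegral.integral_const_mul,
          integral_P_dot c hb Δt (a j l) (contOn_mulVec K (hzcon k l))]
        have hwv : ∀ i : Fin s, wavg c i (fun τ => K.mulVec (z k l τ))
            = K.mulVec (W k l i) := fun i => wavg_mulVec c i K (hzcon k l)
        simp only [hwv]
      rw [Finset.sum_congr rfl hk, sum_mul_mul]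
    have hp3 : (∫ τ in (0:ℝ)..1, ∑ m, Dy l m *
        dotProduct (Δt • ∑ i, lag c i τ • a j l i) (L.mulVec (z j m τ)))
        = Δt * ∑ m, Dy l m * ∑ i, bw c i *
            dotProduct (a j l i) (L.mulVec (W j m i)) := by
      rw [intervalIntegral.integral_finset_sum (fun m _ => contOn_ii ((continuousOn_const (c := Dy l m)).fun_mul
        (contOn_dot2 ((hPc j l).continuousOn) (contOn_mulVec L (hzcon j m)))))]
      have hm : ∀ m ∈ (Finset.univ : Finset (Fin Mt)),
          (∫ τ in (0:ℝ)..1, Dy l m * dotProduct (Δt • ∑ i, lag c i τ • a j l i)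
            (L.mulVec (z j m τ)))
          = Dy l m * (Δt * ∑ i, bw c i *
              dotProduct (a j l i) (L.mulVec (W j m i))) := by
        intro m _
        rw [intervalIntegral.integral_const_mul,
          integral_P_dot c hb Δt (a j l) (contOn_mulVec L (hzcon j m))]
        have hwv : ∀ i : Fin s, wavg c i (fun τ => L.mulVec (z j m τ))
            = L.mulVec (W j m i) := fun i => wavg_mulVec c i L (hzcon j m)
        simp only [hwv]
      rw [Finset.sum_congr rfl hm, sum_mul_mul]
    rw [hp1, hp2, hp3]
    ring
  -- FTC for the quadratic K terms
  have hQK : ∀ k, dotProduct (z1 j l) (K.mulVec (z1 k l))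
      - dotProduct (z0 j l) (K.mulVec (z0 k l))
      = Δt * ∑ i, bw c i * (dotProduct (a j l i) (K.mulVec (W k l i))
          + dotProduct (a k l i) (Kᵀ.mulVec (W j l i))) := by
    intro k
    have hder : ∀ τ ∈ Set.uIcc (0:ℝ) 1,
        HasDerivAt (fun u => dotProduct (z j l u) (K.mulVec (z k l u)))
          (dotProduct (Δt • ∑ i, lag c i τ • a j l i) (K.mulVec (z k l τ))
            + dotProduct (z j l τ) (K.mulVec (Δt • ∑ i, lag c i τ • a k l i))) τ :=
      fun τ _ => hasDerivAt_dot_mulVec K (hzd j l τ) (hzd k l τ)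
    have ha1 : IntervalIntegrable (fun τ => dotProduct (Δt • ∑ i, lag c i τ • a j l i)
        (K.mulVec (z k l τ))) volume 0 1 :=
      contOn_ii (contOn_dot2 ((hPc j l).continuousOn) (contOn_mulVec K (hzcon k l)))
    have ha2 : IntervalIntegrable (fun τ => dotProduct (z j l τ)
        (K.mulVec (Δt • ∑ i, lag c i τ • a k l i))) volume 0 1 :=
      contOn_ii (contOn_dot2 (hzcon j l) (contOn_mulVec K ((hPc k l).continuousOn)))
    have hFTC := intervalIntegral.integral_eq_sub_of_hasDerivAt hder (ha1.add ha2)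
    rw [hz11, hz00, hz11, hz00] at hFTC
    rw [← hFTC, intervalIntegral.integral_add ha1 ha2]
    have hp1 : (∫ τ in (0:ℝ)..1, dotProduct (Δt • ∑ i, lag c i τ • a j l i)
        (K.mulVec (z k l τ)))
        = Δt * ∑ i, bw c i * dotProduct (a j l i) (K.mulVec (W k l i)) := by
      rw [integral_P_dot c hb Δt (a j l) (contOn_mulVec K (hzcon k l))]
      have hwv : ∀ i : Fin s, wavg c i (fun τ => K.mulVec (z k l τ))
          = K.mulVec (W k l i) := fun i => wavg_mulVec c i K (hzcon k l)
      simp only [hwv]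
    have hcongr2 : (∫ τ in (0:ℝ)..1, dotProduct (z j l τ)
        (K.mulVec (Δt • ∑ i, lag c i τ • a k l i)))
        = ∫ τ in (0:ℝ)..1, dotProduct (Δt • ∑ i, lag c i τ • a k l i)
            (Kᵀ.mulVec (z j l τ)) := by
      apply intervalIntegral.integral_congr
      intro τ _
      show dotProduct (z j l τ) (K.mulVec (Δt • ∑ i, lag c i τ • a k l i)) = _
      rw [dot_mulVec_left, dotProduct_comm]
    have hp2 : (∫ τ in (0:ℝ)..1, dotProduct (z j l τ)
        (K.mulVec (Δt • ∑ i, lag c i τ • a k l i)))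
        = Δt * ∑ i, bw c i * dotProduct (a k l i) (Kᵀ.mulVec (W j l i)) := by
      rw [hcongr2, integral_P_dot c hb Δt (a k l) (contOn_mulVec Kᵀ (hzcon j l))]
      have hwv : ∀ i : Fin s, wavg c i (fun τ => Kᵀ.mulVec (z j l τ))
          = Kᵀ.mulVec (W j l i) := fun i => wavg_mulVec c i Kᵀ (hzcon j l)
      simp only [hwv]
    rw [hp1, hp2]
    have hdist : ∀ i ∈ (Finset.univ : Finset (Fin s)),
        bw c i * (dotProduct (a j l i) (K.mulVec (W k l i))
          + dotProduct (a k l i) (Kᵀ.mulVec (W j l i)))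
        = bw c i * dotProduct (a j l i) (K.mulVec (W k l i))
          + bw c i * dotProduct (a k l i) (Kᵀ.mulVec (W j l i)) :=
      fun i _ => mul_add _ _ _
    rw [Finset.sum_congr rfl hdist, Finset.sum_add_distrib]
    ring
  -- FTC for the quadratic L terms
  have hQL : ∀ m, dotProduct (z1 j l) (L.mulVec (z1 j m))
      - dotProduct (z0 j l) (L.mulVec (z0 j m))
      = Δt * ∑ i, bw c i * (dotProduct (a j l i) (L.mulVec (W j m i))
          + dotProduct (a j m i) (Lᵀ.mulVec (W j l i))) := by
    intro m
    have hder : ∀ τ ∈ Set.uIcc (0:ℝ) 1,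
        HasDerivAt (fun u => dotProduct (z j l u) (L.mulVec (z j m u)))
          (dotProduct (Δt • ∑ i, lag c i τ • a j l i) (L.mulVec (z j m τ))
            + dotProduct (z j l τ) (L.mulVec (Δt • ∑ i, lag c i τ • a j m i))) τ :=
      fun τ _ => hasDerivAt_dot_mulVec L (hzd j l τ) (hzd j m τ)
    have ha1 : IntervalIntegrable (fun τ => dotProduct (Δt • ∑ i, lag c i τ • a j l i)
        (L.mulVec (z j m τ))) volume 0 1 :=
      contOn_ii (contOn_dot2 ((hPc j l).continuousOn) (contOn_mulVec L (hzcon j m)))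
    have ha2 : IntervalIntegrable (fun τ => dotProduct (z j l τ)
        (L.mulVec (Δt • ∑ i, lag c i τ • a j m i))) volume 0 1 :=
      contOn_ii (contOn_dot2 (hzcon j l) (contOn_mulVec L ((hPc j m).continuousOn)))
    have hFTC := intervalIntegral.integral_eq_sub_of_hasDerivAt hder (ha1.add ha2)
    rw [hz11, hz00, hz11, hz00] at hFTC
    rw [← hFTC, intervalIntegral.integral_add ha1 ha2]
    have hp1 : (∫ τ in (0:ℝ)..1, dotProduct (Δt • ∑ i, lag c i τ • a j l i)
        (L.mulVec (z j m τ)))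
        = Δt * ∑ i, bw c i * dotProduct (a j l i) (L.mulVec (W j m i)) := by
      rw [integral_P_dot c hb Δt (a j l) (contOn_mulVec L (hzcon j m))]
      have hwv : ∀ i : Fin s, wavg c i (fun τ => L.mulVec (z j m τ))
          = L.mulVec (W j m i) := fun i => wavg_mulVec c i L (hzcon j m)
      simp only [hwv]
    have hcongr2 : (∫ τ in (0:ℝ)..1, dotProduct (z j l τ)
        (L.mulVec (Δt • ∑ i, lag c i τ • a j m i)))
        = ∫ τ in (0:ℝ)..1, dotProduct (Δt • ∑ i, lag c i τ • a j m i)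
            (Lᵀ.mulVec (z j l τ)) := by
      apply intervalIntegral.integral_congr
      intro τ _
      show dotProduct (z j l τ) (L.mulVec (Δt • ∑ i, lag c i τ • a j m i)) = _
      rw [dot_mulVec_left, dotProduct_comm]
    have hp2 : (∫ τ in (0:ℝ)..1, dotProduct (z j l τ)
        (L.mulVec (Δt • ∑ i, lag c i τ • a j m i)))
        = Δt * ∑ i, bw c i * dotProduct (a j m i) (Lᵀ.mulVec (W j l i)) := by
      rw [hcongr2, integral_P_dot c hb Δt (a j m) (contOn_mulVec Lᵀ (hzcon j l))]
      have hwv : ∀ i : Fin s, wavg c i (fun τ => Lᵀ.mulVec (z j l τ))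
          = Lᵀ.mulVec (W j l i) := fun i => wavg_mulVec c i Lᵀ (hzcon j l)
      simp only [hwv]
    rw [hp1, hp2]
    have hdist : ∀ i ∈ (Finset.univ : Finset (Fin s)),
        bw c i * (dotProduct (a j l i) (L.mulVec (W j m i))
          + dotProduct (a j m i) (Lᵀ.mulVec (W j l i)))
        = bw c i * dotProduct (a j l i) (L.mulVec (W j m i))
          + bw c i * dotProduct (a j m i) (Lᵀ.mulVec (W j l i)) :=
      fun i _ => mul_add _ _ _
    rw [Finset.sum_congr rfl hdist, Finset.sum_add_distrib]
    ring
  -- endpoint energy in sum form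
  have hE1S : E1 j l = S (z1 j l) (x j) (y l)
      - (1/2) * ∑ k, Dx j k * dotProduct (z1 j l) (K.mulVec (z1 k l))
      - (1/2) * ∑ m, Dy l m * dotProduct (z1 j l) (L.mulVec (z1 j m)) := by
    rw [hE1, dot_mulVec_sum_smul, dot_mulVec_sum_smul]
  have hE0S : E0 j l = S (z0 j l) (x j) (y l)
      - (1/2) * ∑ k, Dx j k * dotProduct (z0 j l) (K.mulVec (z0 k l))
      - (1/2) * ∑ m, Dy l m * dotProduct (z0 j l) (L.mulVec (z0 j m)) := by
    rw [hE0]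
    simp only [hz00]
    rw [dot_mulVec_sum_smul, dot_mulVec_sum_smul]
  -- difference of quadratic sums
  have hsub1 : (∑ k, Dx j k * dotProduct (z1 j l) (K.mulVec (z1 k l)))
      - (∑ k, Dx j k * dotProduct (z0 j l) (K.mulVec (z0 k l)))
      = Δt * ∑ k, Dx j k * ∑ i, bw c i *
          (dotProduct (a j l i) (K.mulVec (W k l i))
            + dotProduct (a k l i) (Kᵀ.mulVec (W j l i))) := by
    rw [← Finset.sum_sub_distrib]
    have h1 : ∀ k ∈ (Finset.univ : Finset (Fin N)),
        Dx j k * dotProduct (z1 j l) (K.mulVec (z1 k l))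
          - Dx j k * dotProduct (z0 j l) (K.mulVec (z0 k l))
        = Dx j k * (Δt * ∑ i, bw c i *
            (dotProduct (a j l i) (K.mulVec (W k l i))
              + dotProduct (a k l i) (Kᵀ.mulVec (W j l i)))) := by
      intro k _
      rw [← mul_sub, hQK k]
    rw [Finset.sum_congr rfl h1, sum_mul_mul]
  have hsub2 : (∑ m, Dy l m * dotProduct (z1 j l) (L.mulVec (z1 j m)))
      - (∑ m, Dy l m * dotProduct (z0 j l) (L.mulVec (z0 j m)))
      = Δt * ∑ m, Dy l m * ∑ i, bw c i *
          (dotProduct (a j l i) (L.mulVec (W j m i))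
            + dotProduct (a j m i) (Lᵀ.mulVec (W j l i))) := by
    rw [← Finset.sum_sub_distrib]
    have h1 : ∀ m ∈ (Finset.univ : Finset (Fin Mt)),
        Dy l m * dotProduct (z1 j l) (L.mulVec (z1 j m))
          - Dy l m * dotProduct (z0 j l) (L.mulVec (z0 j m))
        = Dy l m * (Δt * ∑ i, bw c i *
            (dotProduct (a j l i) (L.mulVec (W j m i))
              + dotProduct (a j m i) (Lᵀ.mulVec (W j l i)))) := by
      intro m _
      rw [← mul_sub, hQL m]
    rw [Finset.sum_congr rfl h1, sum_mul_mul]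
  -- flux sums in plain form
  have hFbS : (∑ k, Dx j k * Fb j k l) = (1/2) * ∑ k, Dx j k * ∑ i, bw c i *
      (dotProduct (W j l i) (K.mulVec (a k l i))
        + dotProduct (W k l i) (K.mulVec (a j l i))) := by
    have h1 : ∀ k ∈ (Finset.univ : Finset (Fin N)), Dx j k * Fb j k l
        = Dx j k * ((1/2) * ∑ i, bw c i *
          (dotProduct (W j l i) (K.mulVec (a k l i))
            + dotProduct (W k l i) (K.mulVec (a j l i)))) := by
      intro k _
      rw [hFb]
    rw [Finset.sum_congr rfl h1, sum_mul_mul]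
  have hGbS : (∑ m, Dy l m * Gb j l m) = (1/2) * ∑ m, Dy l m * ∑ i, bw c i *
      (dotProduct (W j l i) (L.mulVec (a j m i))
        + dotProduct (W j m i) (L.mulVec (a j l i))) := by
    have h1 : ∀ m ∈ (Finset.univ : Finset (Fin Mt)), Dy l m * Gb j l m
        = Dy l m * ((1/2) * ∑ i, bw c i *
          (dotProduct (W j l i) (L.mulVec (a j m i))
            + dotProduct (W j m i) (L.mulVec (a j l i)))) := by
      intro m _
      rw [hGb]
    rw [Finset.sum_congr rfl h1, sum_mul_mul]
  -- the pointwise cancellation identities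
  have hker : ∀ k, (∑ i, bw c i * dotProduct (a j l i) (K.mulVec (W k l i)))
      - (1/2) * (∑ i, bw c i * (dotProduct (a j l i) (K.mulVec (W k l i))
          + dotProduct (a k l i) (Kᵀ.mulVec (W j l i))))
      + (1/2) * (∑ i, bw c i * (dotProduct (W j l i) (K.mulVec (a k l i))
          + dotProduct (W k l i) (K.mulVec (a j l i)))) = 0 := by
    intro k
    rw [Finset.mul_sum, Finset.mul_sum, ← Finset.sum_sub_distrib, ← Finset.sum_add_distrib]
    apply Finset.sum_eq_zero
    intro i _
    have h1 := dot_skew_swap hK (a k l i) (W j l i)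
    have h2 := dot_skew_swap hK (a j l i) (W k l i)
    rw [hK, Matrix.neg_mulVec, dotProduct_neg]
    linear_combination (bw c i / 2) * h1 + (bw c i / 2) * h2
  have hler : ∀ m, (∑ i, bw c i * dotProduct (a j l i) (L.mulVec (W j m i)))
      - (1/2) * (∑ i, bw c i * (dotProduct (a j l i) (L.mulVec (W j m i))
          + dotProduct (a j m i) (Lᵀ.mulVec (W j l i))))
      + (1/2) * (∑ i, bw c i * (dotProduct (W j l i) (L.mulVec (a j m i))
          + dotProduct (W j m i) (L.mulVec (a j l i)))) = 0 := by
    intro m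
    rw [Finset.mul_sum, Finset.mul_sum, ← Finset.sum_sub_distrib, ← Finset.sum_add_distrib]
    apply Finset.sum_eq_zero
    intro i _
    have h1 := dot_skew_swap hL (a j m i) (W j l i)
    have h2 := dot_skew_swap hL (a j l i) (W j m i)
    rw [hL, Matrix.neg_mulVec, dotProduct_neg]
    linear_combination (bw c i / 2) * h1 + (bw c i / 2) * h2
  -- combined sum cancellations
  have hcombK : (∑ k, Dx j k * ∑ i, bw c i *
        dotProduct (a j l i) (K.mulVec (W k l i)))
      - (1/2) * (∑ k, Dx j k * ∑ i, bw c i *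
          (dotProduct (a j l i) (K.mulVec (W k l i))
            + dotProduct (a k l i) (Kᵀ.mulVec (W j l i))))
      + (1/2) * (∑ k, Dx j k * ∑ i, bw c i *
          (dotProduct (W j l i) (K.mulVec (a k l i))
            + dotProduct (W k l i) (K.mulVec (a j l i)))) = 0 := by
    rw [Finset.mul_sum, Finset.mul_sum, ← Finset.sum_sub_distrib, ← Finset.sum_add_distrib]
    apply Finset.sum_eq_zero
    intro k _
    linear_combination Dx j k * hker k
  have hcombL : (∑ m, Dy l m * ∑ i, bw c i *
        dotProduct (a j l i) (L.mulVec (W j m i)))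
      - (1/2) * (∑ m, Dy l m * ∑ i, bw c i *
          (dotProduct (a j l i) (L.mulVec (W j m i))
            + dotProduct (a j m i) (Lᵀ.mulVec (W j l i))))
      + (1/2) * (∑ m, Dy l m * ∑ i, bw c i *
          (dotProduct (W j l i) (L.mulVec (a j m i))
            + dotProduct (W j m i) (L.mulVec (a j l i)))) = 0 := by
    rw [Finset.mul_sum, Finset.mul_sum, ← Finset.sum_sub_distrib, ← Finset.sum_add_distrib]
    apply Finset.sum_eq_zero
    intro m _
    linear_combination Dy l m * hler m
  -- final assembly
  have key : E1 j l - E0 j l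
      + Δt * ((∑ k, Dx j k * Fb j k l) + (∑ m, Dy l m * Gb j l m)) = 0 := by
    linear_combination hE1S - hE0S + hSdiff - (1/2) * hsub1 - (1/2) * hsub2
      + Δt * hFbS + Δt * hGbS + Δt * hcombK + Δt * hcombL
  have hΔ : Δt ≠ 0 := ne_of_gt hΔt
  have hdiv : (E1 j l - E0 j l) / Δt
      = -((∑ k, Dx j k * Fb j k l) + (∑ m, Dy l m * Gb j l m)) := by
    rw [div_eq_iff hΔ]
    linear_combination key
  rw [hdiv]
  ring
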